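/- Let μ be a probability measure on the unit circle with infinite support, (Φ_n) its monic orthogonal polynomials, φ_n = Φ_n/‖Φ_n‖_μ its orthonormal polynomials, φ_n^* the reversed orthonormal polynomials, and α_n = -conj(Φ_{n+1}(0)) its Verblunsky coefficients. Fix 0 < γ < 1 and ζ = e^{iω} on the unit circle, and let ν = (1-γ)μ + γδ_ω. Then α_n(dν) = α_n + conj(φ_{n+1}(ζ)) φ_n^*(0) φ_n^*(ζ) ‖Φ_{n+1}‖_μ / ((1-γ)γ^{-1} + K_n(ζ)), where K_n(ζ) = Σ_{j=0}^{n} |φ_j(ζ)|². -/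

import Mathlib

open MeasureTheory Polynomial Finset

noncomputable section

/-- The `L²(μ)` inner product `⟨f,g⟩_μ = ∫ conj (f z) * g z dμ(z)`. -/
def mInner (μ : Measure ℂ) (f g : ℂ → ℂ) : ℂ :=
  ∫ z, (starRingEnd ℂ) (f z) * g z ∂μ

/-- The `L²(μ)` norm `‖f‖_μ = (∫ |f z|² dμ(z))^{1/2}`. -/
def mNorm (μ : Measure ℂ) (f : ℂ → ℂ) : ℝ :=
  Real.sqrt (∫ z, ‖f z‖ ^ 2 ∂μ)

/-- `Φ` is the family of monic orthogonal polynomials for `μ`: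
`Φ n` is monic of degree `n`, and distinct `Φ`'s are orthogonal in `L²(μ)`. -/
def IsMonicOPS (μ : Measure ℂ) (Φ : ℕ → Polynomial ℂ) : Prop :=
  (∀ n, (Φ n).Monic ∧ (Φ n).natDegree = n) ∧
    ∀ m n, m ≠ n →
      mInner μ (fun z => (Φ m).eval z) (fun z => (Φ n).eval z) = 0

/-- `μ` is a measure on the unit circle `∂𝔻 = {z : ℂ | |z| = 1}`. -/
def OnCircle (μ : Measure ℂ) : Prop := μ {z : ℂ | ‖z‖ = 1}ᶜ = 0

/-- The (closed) support of `μ` is an infinite set: every closed set of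
full measure is infinite. -/
def InfiniteSupport (μ : Measure ℂ) : Prop :=
  ∀ t : Set ℂ, IsClosed t → μ tᶜ = 0 → t.Infinite

namespace VIPM

/-- Shorthand for the inner product of two polynomial evaluations. -/
def PI (σ : Measure ℂ) (p q : Polynomial ℂ) : ℂ :=
  mInner σ (fun z => p.eval z) (fun z => q.eval z)

lemma circle_ae (σ : Measure ℂ) (h : OnCircle σ) : ∀ᵐ z ∂σ, ‖z‖ = 1 := by
  rw [ae_iff]
  simpa [OnCircle, Set.compl_setOf] using h

lemma integrable_of_continuous {E : Type*} [NormedAddCommGroup E]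
    (σ : Measure ℂ) [IsFiniteMeasure σ] (h : OnCircle σ)
    (f : ℂ → E) (hf : Continuous f) : Integrable f σ := by
  obtain ⟨C, hC⟩ := (isCompact_sphere (0:ℂ) 1).exists_bound_of_continuousOn hf.continuousOn
  refine Integrable.mono' (integrable_const C) hf.aestronglyMeasurable ?_
  filter_upwards [circle_ae σ h] with z hz
  exact hC z (by simpa [mem_sphere_zero_iff_norm] using hz)

lemma integrablePQ (σ : Measure ℂ) [IsFiniteMeasure σ] (h : OnCircle σ) (p q : Polynomial ℂ) :
    Integrable (fun z => (starRingEnd ℂ) (p.eval z) * q.eval z) σ :=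
  integrable_of_continuous σ h _ (((continuous_star.comp p.continuous)).mul q.continuous)

lemma PI_sum_left (σ : Measure ℂ) [IsFiniteMeasure σ] (h : OnCircle σ) {ι : Type*}
    (s : Finset ι) (b : ι → ℂ) (P : ι → Polynomial ℂ) (q : Polynomial ℂ) :
    PI σ (∑ j ∈ s, Polynomial.C (b j) * P j) q
      = ∑ j ∈ s, (starRingEnd ℂ) (b j) * PI σ (P j) q := by
  unfold PI mInner
  have hfun : (fun z => (starRingEnd ℂ) ((∑ j ∈ s, Polynomial.C (b j) * P j).eval z) * q.eval z)
      = fun z => ∑ j ∈ s, (starRingEnd ℂ) (b j) * ((starRingEnd ℂ) ((P j).eval z) * q.eval z) := by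
    funext z
    rw [eval_finset_sum, map_sum, Finset.sum_mul]
    exact Finset.sum_congr rfl fun j _ => by simp [mul_assoc]
  rw [show (fun z => (starRingEnd ℂ) ((fun z => (∑ j ∈ s, Polynomial.C (b j) * P j).eval z) z) * (fun z => q.eval z) z) = fun z => ∑ j ∈ s, (starRingEnd ℂ) (b j) * ((starRingEnd ℂ) ((P j).eval z) * q.eval z) from hfun,
    integral_finset_sum _ (fun j _ => ((integrablePQ σ h (P j) q).const_mul _))]
  exact Finset.sum_congr rfl fun j _ => integral_const_mul _ _

lemma PI_sum_right (σ : Measure ℂ) [IsFiniteMeasure σ] (h : OnCircle σ) {ι : Type*}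
    (s : Finset ι) (b : ι → ℂ) (P : ι → Polynomial ℂ) (q : Polynomial ℂ) :
    PI σ q (∑ j ∈ s, Polynomial.C (b j) * P j)
      = ∑ j ∈ s, b j * PI σ q (P j) := by
  unfold PI mInner
  have hfun : (fun z => (starRingEnd ℂ) ((fun z => q.eval z) z) * (fun z => (∑ j ∈ s, Polynomial.C (b j) * P j).eval z) z)
      = fun z => ∑ j ∈ s, b j * ((starRingEnd ℂ) (q.eval z) * (P j).eval z) := by
    funext z
    simp only [eval_finset_sum, Finset.mul_sum]
    exact Finset.sum_congr rfl fun j _ => by simp only [eval_mul, eval_C]; ring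
  rw [hfun, integral_finset_sum _ (fun j _ => ((integrablePQ σ h q (P j)).const_mul _))]
  exact Finset.sum_congr rfl fun j _ => integral_const_mul _ _

lemma PI_sub_right (σ : Measure ℂ) [IsFiniteMeasure σ] (h : OnCircle σ)
    (p q r : Polynomial ℂ) : PI σ p (q - r) = PI σ p q - PI σ p r := by
  unfold PI mInner
  rw [← integral_sub (integrablePQ σ h p q) (integrablePQ σ h p r)]
  congr 1
  funext z
  simp [mul_sub]

lemma PI_conj (σ : Measure ℂ) (p q : Polynomial ℂ) :
    PI σ p q = (starRingEnd ℂ) (PI σ q p) := by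
  unfold PI mInner
  rw [← integral_conj]
  congr 1
  funext z
  simp only [map_mul, Complex.conj_conj]
  ring

lemma PI_self (σ : Measure ℂ) (p : Polynomial ℂ) :
    PI σ p p = ((∫ z, ‖p.eval z‖ ^ 2 ∂σ : ℝ) : ℂ) := by
  unfold PI mInner
  calc (∫ z, (starRingEnd ℂ) (p.eval z) * p.eval z ∂σ)
      = ∫ z, ((‖p.eval z‖ ^ 2 : ℝ) : ℂ) ∂σ := by
        congr 1
        funext z
        rw [Complex.conj_mul']
        norm_cast
    _ = ((∫ z, ‖p.eval z‖ ^ 2 ∂σ : ℝ) : ℂ) := integral_ofReal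

lemma PI_eq_zero (σ : Measure ℂ) [IsFiniteMeasure σ] (h : OnCircle σ)
    (hs : InfiniteSupport σ) (p : Polynomial ℂ) (hp : PI σ p p = 0) : p = 0 := by
  by_contra hne
  have hI : Integrable (fun z => ‖p.eval z‖ ^ 2) σ :=
    integrable_of_continuous σ h _ (by continuity)
  have h0 : (∫ z, ‖p.eval z‖ ^ 2 ∂σ : ℝ) = 0 := by
    have := PI_self σ p
    rw [hp] at this
    exact_mod_cast this.symm
  have hae : (fun z => ‖p.eval z‖ ^ 2) =ᵐ[σ] 0 :=
    (integral_eq_zero_iff_of_nonneg (fun z => sq_nonneg _) hI).mp h0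
  have hroot : σ {z : ℂ | p.IsRoot z}ᶜ = 0 := by
    rw [Filter.EventuallyEq, ae_iff] at hae
    refine le_antisymm (le_trans (measure_mono ?_) hae.le) zero_le
    intro z hz
    simp only [Set.mem_compl_iff, Set.mem_setOf_eq, IsRoot.def] at hz
    simp only [Set.mem_setOf_eq, Pi.zero_apply, pow_eq_zero_iff, norm_eq_zero, two_ne_zero,
      ne_eq, not_false_eq_true, and_true]
    simpa using hz
  have hfin : ({z : ℂ | p.IsRoot z}).Finite := p.finite_setOf_isRoot hne
  exact hfin.not_infinite (hs _ hfin.isClosed hroot)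


/-- Monic family of each degree spans: representation lemma. -/
lemma exists_rep (P : ℕ → Polynomial ℂ) (hP : ∀ n, (P n).Monic ∧ (P n).natDegree = n) :
    ∀ n (p : Polynomial ℂ), p.natDegree ≤ n →
      ∃ b : ℕ → ℂ, p = ∑ j ∈ range (n + 1), Polynomial.C (b j) * P j := by
  intro n
  induction n with
  | zero =>
    intro p hp
    refine ⟨fun _ => p.coeff 0, ?_⟩
    have h1 : P 0 = 1 := (hP 0).1.natDegree_eq_zero.mp (hP 0).2
    rw [Finset.sum_range_one, h1, mul_one, ← Polynomial.eq_C_of_natDegree_le_zero hp]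
  | succ n ih =>
    intro p hp
    set q := p - Polynomial.C (p.coeff (n + 1)) * P (n + 1) with hq
    have hPd : (P (n + 1)).natDegree = n + 1 := (hP (n + 1)).2
    have hqd : q.natDegree ≤ n := by
      rw [natDegree_le_iff_coeff_eq_zero]
      intro N hN
      have hNd : q.coeff N = p.coeff N - p.coeff (n + 1) * (P (n + 1)).coeff N := by
        simp [hq, coeff_sub]
      rcases eq_or_lt_of_le (Nat.succ_le_of_lt hN) with hN1 | hN1
      · rw [hNd, ← hN1]
        have : (P (n + 1)).coeff (n + 1) = 1 := by
          have := (hP (n + 1)).1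
          rw [Monic, leadingCoeff, hPd] at this
          exact this
        rw [this, mul_one, sub_self]
      · rw [hNd, coeff_eq_zero_of_natDegree_lt (lt_of_le_of_lt hp hN1),
          coeff_eq_zero_of_natDegree_lt (by omega : (P (n + 1)).natDegree < N), mul_zero, sub_self]
    obtain ⟨b, hb⟩ := ih q hqd
    refine ⟨Function.update b (n + 1) (p.coeff (n + 1)), ?_⟩
    rw [Finset.sum_range_succ]
    have hcongr : ∀ j ∈ range (n + 1),
        Polynomial.C (Function.update b (n + 1) (p.coeff (n + 1)) j) * P j
          = Polynomial.C (b j) * P j := by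
      intro j hj
      rw [Function.update_of_ne (by simp at hj; omega)]
    rw [Finset.sum_congr rfl hcongr, ← hb, Function.update_self, hq]
    ring

/-- In such a representation, `b n = p.coeff n`. -/
lemma rep_coeff (P : ℕ → Polynomial ℂ) (hP : ∀ n, (P n).Monic ∧ (P n).natDegree = n)
    (p : Polynomial ℂ) (n : ℕ) (b : ℕ → ℂ)
    (hb : p = ∑ j ∈ range (n + 1), Polynomial.C (b j) * P j) : b n = p.coeff n := by
  have : p.coeff n = ∑ j ∈ range (n + 1), b j * (P j).coeff n := by
    rw [hb, finset_sum_coeff]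
    exact Finset.sum_congr rfl fun j _ => by rw [coeff_C_mul]
  rw [this, Finset.sum_eq_single n]
  · have h1 : (P n).coeff n = 1 := by
      have := (hP n).1
      rw [Monic, leadingCoeff, (hP n).2] at this
      exact this
    rw [h1, mul_one]
  · intro j hj hjn
    rw [coeff_eq_zero_of_natDegree_lt (by rw [(hP j).2]; simp at hj; omega), mul_zero]
  · intro h
    exact absurd (self_mem_range_succ n) h

/-- Moment formula: `⟨p, Φ n⟩ = conj (p.coeff n) ⟨Φ n, Φ n⟩` for `deg p ≤ n`. -/
lemma PI_against (σ : Measure ℂ) [IsFiniteMeasure σ] (hc : OnCircle σ)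
    (P : ℕ → Polynomial ℂ) (hP : IsMonicOPS σ P) (p : Polynomial ℂ) (n : ℕ)
    (hp : p.natDegree ≤ n) :
    PI σ p (P n) = (starRingEnd ℂ) (p.coeff n) * PI σ (P n) (P n) := by
  obtain ⟨b, hb⟩ := exists_rep P hP.1 n p hp
  rw [hb, PI_sum_left σ hc]
  rw [Finset.sum_eq_single n]
  · rw [rep_coeff P hP.1 p n b hb, hb]
  · intro j hj hjn
    have : PI σ (P j) (P n) = 0 := hP.2 j n hjn
    rw [this, mul_zero]
  · intro h
    exact absurd (self_mem_range_succ n) h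

/-- `⟨Φ n, Φ n⟩` is conj-stable (real). -/
lemma PI_self_conj (σ : Measure ℂ) (p : Polynomial ℂ) :
    (starRingEnd ℂ) (PI σ p p) = PI σ p p := (PI_conj σ p p).symm

/-- If `q ⊥ P j` for all `j ≤ n`, then `q ⊥ p` for every `p` of degree at most `n`. -/
lemma PI_zero_of (σ : Measure ℂ) [IsFiniteMeasure σ] (hc : OnCircle σ)
    (P : ℕ → Polynomial ℂ) (hP : ∀ n, (P n).Monic ∧ (P n).natDegree = n)
    (q : Polynomial ℂ) (n : ℕ) (h : ∀ j ≤ n, PI σ (P j) q = 0)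
    (p : Polynomial ℂ) (hp : p.natDegree ≤ n) : PI σ p q = 0 := by
  obtain ⟨b, hb⟩ := exists_rep P hP n p hp
  rw [hb, PI_sum_left σ hc]
  refine Finset.sum_eq_zero fun j hj => ?_
  rw [h j (by simp at hj; omega), mul_zero]


/-- conj-map evaluation: `(q.map conj).eval z = conj (q.eval (conj z))`. -/
lemma eval_map_conj (q : Polynomial ℂ) (z : ℂ) :
    (q.map (starRingEnd ℂ)).eval z = (starRingEnd ℂ) (q.eval ((starRingEnd ℂ) z)) := by
  conv_lhs => rw [show z = (starRingEnd ℂ) ((starRingEnd ℂ) z) from (Complex.conj_conj z).symm]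
  rw [Polynomial.eval_map, Polynomial.eval₂_at_apply]

/-- reverse evaluation at a nonzero point. -/
lemma eval_reverse (p : Polynomial ℂ) {w : ℂ} (hw : w ≠ 0) :
    p.reverse.eval w = w ^ p.natDegree * p.eval w⁻¹ := by
  have : Invertible w⁻¹ := invertibleOfNonzero (inv_ne_zero hw)
  have h := Polynomial.eval₂_reverse_mul_pow (RingHom.id ℂ) (w⁻¹) p
  rw [invOf_eq_inv, inv_inv] at h
  have hid : ∀ (x : ℂ) (r : Polynomial ℂ), eval₂ (RingHom.id ℂ) x r = r.eval x := fun x r => rfl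
  rw [hid, hid] at h
  rw [inv_pow] at h
  rw [← h]
  field_simp

/-- On the circle, the starred polynomial evaluates as `z^n conj(p(z))`. -/
lemma eval_star (p : Polynomial ℂ) {z : ℂ} (hz : ‖z‖ = 1) :
    (p.reverse.map (starRingEnd ℂ)).eval z
      = z ^ p.natDegree * (starRingEnd ℂ) (p.eval z) := by
  have hz0 : z ≠ 0 := by intro h; rw [h] at hz; simp at hz
  have hmc : z * (starRingEnd ℂ) z = 1 := by
    rw [Complex.mul_conj']
    norm_cast
    rw [hz]; norm_num
  have hzc : (starRingEnd ℂ) z = z⁻¹ := by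
    field_simp
    linear_combination hmc
  rw [eval_map_conj, hzc, eval_reverse p (inv_ne_zero hz0), inv_inv, map_mul, map_pow,
    map_inv₀, hzc, inv_inv]

/-- `⟨z^m, Φ_n^*⟩ = conj ⟨z^{n-m}, Φ_n⟩` for `m ≤ n` on the circle. -/
lemma PI_monomial_star (σ : Measure ℂ) [IsFiniteMeasure σ] (hc : OnCircle σ)
    (p : Polynomial ℂ) (hpd : p.natDegree = p.natDegree) (m : ℕ) (hm : m ≤ p.natDegree) :
    PI σ (X ^ m) (p.reverse.map (starRingEnd ℂ))
      = (starRingEnd ℂ) (PI σ (X ^ (p.natDegree - m)) p) := by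
  unfold PI mInner
  rw [← integral_conj]
  apply integral_congr_ae
  filter_upwards [circle_ae σ hc] with z hz
  have hmc : (starRingEnd ℂ) z * z = 1 := by
    rw [Complex.conj_mul']
    norm_cast
    rw [hz]; norm_num
  simp only [eval_pow, eval_X, map_mul, map_pow, Complex.conj_conj]
  rw [eval_star p hz]
  have hsplit : z ^ p.natDegree = z ^ m * z ^ (p.natDegree - m) := by
    rw [← pow_add]; congr 1; omega
  have hone : (starRingEnd ℂ) z ^ m * z ^ m = 1 := by
    rw [← mul_pow, hmc, one_pow]
  calc (starRingEnd ℂ) z ^ m * (z ^ p.natDegree * (starRingEnd ℂ) (p.eval z))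
      = ((starRingEnd ℂ) z ^ m * z ^ m) * (z ^ (p.natDegree - m) * (starRingEnd ℂ) (p.eval z)) := by
        rw [hsplit]; ring
    _ = z ^ (p.natDegree - m) * (starRingEnd ℂ) (p.eval z) := by rw [hone, one_mul]

/-- Star moments against the orthogonal family:
`⟨Φ k, Φ_n^*⟩ = conj((Φ k)(0)) ⟨Φ n, Φ n⟩` for `k ≤ n`. -/
lemma PI_star_moment (σ : Measure ℂ) [IsFiniteMeasure σ] (hc : OnCircle σ)
    (P : ℕ → Polynomial ℂ) (hP : IsMonicOPS σ P) (n k : ℕ) (hk : k ≤ n) :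
    PI σ (P k) ((P n).reverse.map (starRingEnd ℂ))
      = (starRingEnd ℂ) ((P k).coeff 0) * PI σ (P n) (P n) := by
  have hkd : (P k).natDegree = k := (hP.1 k).2
  have hnd : (P n).natDegree = n := (hP.1 n).2
  have hrepr : P k = ∑ m ∈ range (k + 1), Polynomial.C ((P k).coeff m) * X ^ m := by
    conv_lhs => rw [(P k).as_sum_range_C_mul_X_pow]
    rw [hkd]
  conv_lhs => rw [hrepr]
  rw [PI_sum_left σ hc]
  rw [Finset.sum_eq_single 0]
  · have hXn : PI σ (X ^ n) (P n) = (starRingEnd ℂ) ((X ^ n : Polynomial ℂ).coeff n) * PI σ (P n) (P n) :=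
      PI_against σ hc P hP _ n (by simp)
    rw [PI_monomial_star σ hc (P n) rfl 0 (by omega), Nat.sub_zero, hnd, hXn, map_mul,
      Complex.conj_conj, PI_self_conj]
    simp [coeff_X_pow]
  · intro m hm hm0
    have hXm : PI σ (X ^ (n - m)) (P n)
        = (starRingEnd ℂ) ((X ^ (n - m) : Polynomial ℂ).coeff n) * PI σ (P n) (P n) :=
      PI_against σ hc P hP _ n (by simp)
    rw [PI_monomial_star σ hc (P n) rfl m (by simp at hm; omega), hnd, hXm, map_mul,
      Complex.conj_conj]
    have hne : ¬ (n = n - m) := by simp at hm; omega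
    simp [coeff_X_pow, hne]
  · intro h
    simp at h

/-- Kernel identity: `Φ_n^* = Σ_{j≤n} conj(Φ_j(0)) (⟨Φn,Φn⟩/⟨Φj,Φj⟩) Φ_j`. -/
lemma kernel_identity (σ : Measure ℂ) [IsFiniteMeasure σ] (hc : OnCircle σ)
    (hs : InfiniteSupport σ) (P : ℕ → Polynomial ℂ) (hP : IsMonicOPS σ P) (n : ℕ) :
    (P n).reverse.map (starRingEnd ℂ)
      = ∑ j ∈ range (n + 1),
          Polynomial.C ((starRingEnd ℂ) ((P j).coeff 0) * PI σ (P n) (P n) / PI σ (P j) (P j))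
            * P j := by
  set R := (P n).reverse.map (starRingEnd ℂ) with hR
  set T := ∑ j ∈ range (n + 1),
      Polynomial.C ((starRingEnd ℂ) ((P j).coeff 0) * PI σ (P n) (P n) / PI σ (P j) (P j)) * P j
    with hT
  have hPIne : ∀ j, PI σ (P j) (P j) ≠ 0 := by
    intro j h
    have := PI_eq_zero σ hc hs (P j) h
    exact (hP.1 j).1.ne_zero this
  have horth : ∀ k ≤ n, PI σ (P k) (R - T) = 0 := by
    intro k hk
    rw [PI_sub_right σ hc, PI_star_moment σ hc P hP n k hk, hT, PI_sum_right σ hc]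
    rw [Finset.sum_eq_single k]
    · rw [div_mul_eq_mul_div, mul_div_assoc, div_self (hPIne k), mul_one, sub_self]
    · intro j hj hjk
      have h0 : PI σ (P k) (P j) = 0 := hP.2 k j (fun h => hjk h.symm)
      rw [h0, mul_zero]
    · intro h
      exact absurd (by simp; omega : k ∈ range (n + 1)) h
  have hdegR : R.natDegree ≤ n := by
    refine le_trans natDegree_map_le (le_trans (P n).reverse_natDegree_le ?_)
    exact le_of_eq (hP.1 n).2
  have hdegT : T.natDegree ≤ n := by
    refine natDegree_sum_le_of_forall_le _ _ fun j hj => ?_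
    refine le_trans (natDegree_C_mul_le _ _) ?_
    rw [(hP.1 j).2] at *; simp at hj; omega
  have hdegD : (R - T).natDegree ≤ n :=
    le_trans (natDegree_sub_le _ _) (max_le hdegR hdegT)
  have hzero : PI σ (R - T) (R - T) = 0 :=
    PI_zero_of σ hc P hP.1 (R - T) n horth (R - T) hdegD
  have hD := PI_eq_zero σ hc hs (R - T) hzero
  exact sub_eq_zero.mp hD


section Nu

variable (μ : Measure ℂ) [IsFiniteMeasure μ] (γ : ℝ) (ζ : ℂ)

lemma nu_finite :
    IsFiniteMeasure (ENNReal.ofReal (1 - γ) • μ + ENNReal.ofReal γ • Measure.dirac ζ) := by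
  constructor
  rw [Measure.add_apply, Measure.smul_apply, Measure.smul_apply, smul_eq_mul, smul_eq_mul]
  exact ENNReal.add_lt_top.mpr
    ⟨ENNReal.mul_lt_top ENNReal.ofReal_lt_top (measure_lt_top μ _),
     ENNReal.mul_lt_top ENNReal.ofReal_lt_top (measure_lt_top _ _)⟩

lemma nu_oncircle (hc : OnCircle μ) (hζ : ‖ζ‖ = 1) :
    OnCircle (ENNReal.ofReal (1 - γ) • μ + ENNReal.ofReal γ • Measure.dirac ζ) := by
  unfold OnCircle at *
  rw [Measure.add_apply, Measure.smul_apply, Measure.smul_apply, hc, smul_eq_mul, mul_zero,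
    zero_add, smul_eq_mul]
  have : Measure.dirac ζ {z : ℂ | ‖z‖ = 1}ᶜ = 0 := by
    rw [Measure.dirac_apply]
    simp only [Set.indicator, Set.mem_compl_iff, Set.mem_setOf_eq]
    rw [if_neg (by simp [hζ])]
  rw [this, mul_zero]

lemma nu_infsupp (hγ1 : γ < 1) (hs : InfiniteSupport μ) :
    InfiniteSupport (ENNReal.ofReal (1 - γ) • μ + ENNReal.ofReal γ • Measure.dirac ζ) := by
  intro t ht hnull
  refine hs t ht ?_
  rw [Measure.add_apply, Measure.smul_apply, Measure.smul_apply, smul_eq_mul, smul_eq_mul] at hnull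
  have h1 : ENNReal.ofReal (1 - γ) * μ tᶜ = 0 := by
    have := add_eq_zero.mp hnull
    exact this.1
  rcases mul_eq_zero.mp h1 with h | h
  · exact absurd h (by simp [ENNReal.ofReal_eq_zero]; linarith)
  · exact h

/-- Decomposition of the inner product with respect to `ν`. -/
lemma PI_nu (hc : OnCircle μ) (hγ0 : 0 ≤ γ) (hγ1 : γ ≤ 1) (p q : Polynomial ℂ) :
    PI (ENNReal.ofReal (1 - γ) • μ + ENNReal.ofReal γ • Measure.dirac ζ) p q
      = ((1 - γ : ℝ) : ℂ) * PI μ p q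
        + (γ : ℂ) * ((starRingEnd ℂ) (p.eval ζ) * q.eval ζ) := by
  unfold PI mInner
  have hint : Integrable (fun z => (starRingEnd ℂ) (p.eval z) * q.eval z)
      (ENNReal.ofReal (1 - γ) • μ) := by
    refine Integrable.smul_measure (integrablePQ μ hc p q) ENNReal.ofReal_ne_top
  have hint2 : Integrable (fun z => (starRingEnd ℂ) (p.eval z) * q.eval z)
      (ENNReal.ofReal γ • Measure.dirac ζ) := by
    refine Integrable.smul_measure ?_ ENNReal.ofReal_ne_top
    exact (integrable_const _).congr (ae_eq_dirac _).symm
  rw [integral_add_measure hint hint2, integral_smul_measure, integral_smul_measure,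
    integral_dirac]
  rw [ENNReal.toReal_ofReal (by linarith), ENNReal.toReal_ofReal hγ0]
  simp [Complex.real_smul]

end Nu


end VIPM


open VIPM

/-- Formula (2.27):
`α_n(dν) = α_n + conj(φ_{n+1}(ζ)) φ_n^*(0) φ_n^*(ζ) ‖Φ_{n+1}‖ / ((1-γ)γ⁻¹ + K_n(ζ))`. -/
theorem verblunsky_insert_point_mass_reversed_form
    (μ : Measure ℂ) [IsProbabilityMeasure μ] (hcirc : OnCircle μ)
    (hsupp : InfiniteSupport μ)
    (Φ : ℕ → Polynomial ℂ) (hΦ : IsMonicOPS μ Φ)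
    (φ : ℕ → ℂ → ℂ)
    (hφ : ∀ m z, φ m z = (Φ m).eval z / (mNorm μ (fun w => (Φ m).eval w) : ℂ))
    (φs : ℕ → ℂ → ℂ)
    (hφs : ∀ m z, φs m z =
      ((Φ m).reverse.map (starRingEnd ℂ)).eval z / (mNorm μ (fun w => (Φ m).eval w) : ℂ))
    (α : ℕ → ℂ) (hα : ∀ n, α n = -(starRingEnd ℂ) ((Φ (n + 1)).eval 0))
    (γ : ℝ) (hγ0 : 0 < γ) (hγ1 : γ < 1)
    (ω : ℝ) (ζ : ℂ) (hζ : ζ = Complex.exp (ω * Complex.I))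
    (ν : Measure ℂ)
    (hν : ν = ENNReal.ofReal (1 - γ) • μ + ENNReal.ofReal γ • Measure.dirac ζ)
    (Ψ : ℕ → Polynomial ℂ) (hΨ : IsMonicOPS ν Ψ)
    (αν : ℕ → ℂ) (hαν : ∀ n, αν n = -(starRingEnd ℂ) ((Ψ (n + 1)).eval 0))
    (K : ℕ → ℝ) (hK : ∀ n, K n = ∑ j ∈ Finset.range (n + 1), ‖φ j ζ‖ ^ 2)
    (n : ℕ) :
    αν n = α n + (starRingEnd ℂ) (φ (n + 1) ζ) * φs n 0 * φs n ζ *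
        ((mNorm μ (fun w => (Φ (n + 1)).eval w) : ℝ) : ℂ) /
        (((1 - γ) * γ⁻¹ + K n : ℝ) : ℂ) := by
  -- notation
  set I : ℕ → ℝ := fun j => ∫ z, ‖(Φ j).eval z‖ ^ 2 ∂μ with hI
  have hPIself : ∀ j, PI μ (Φ j) (Φ j) = ((I j : ℝ) : ℂ) := fun j => PI_self μ (Φ j)
  have hPIne : ∀ j, PI μ (Φ j) (Φ j) ≠ 0 := by
    intro j h
    exact (hΦ.1 j).1.ne_zero (PI_eq_zero μ hcirc hsupp (Φ j) h)
  have hIpos : ∀ j, 0 < I j := by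
    intro j
    rcases lt_or_eq_of_le (integral_nonneg (fun z => sq_nonneg _) : 0 ≤ I j) with h | h
    · exact h
    · exfalso
      exact hPIne j (by rw [hPIself j]; exact_mod_cast h.symm)
  have hnorm : ∀ j, mNorm μ (fun w => (Φ j).eval w) = Real.sqrt (I j) := fun j => rfl
  have hζ1 : ‖ζ‖ = 1 := by
    rw [hζ, Complex.norm_exp_ofReal_mul_I]
  -- the measure ν
  subst hν
  haveI : IsFiniteMeasure (ENNReal.ofReal (1 - γ) • μ + ENNReal.ofReal γ • Measure.dirac ζ) :=
    nu_finite μ γ ζ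
  have hcν : OnCircle (ENNReal.ofReal (1 - γ) • μ + ENNReal.ofReal γ • Measure.dirac ζ) :=
    nu_oncircle μ γ ζ hcirc hζ1
  have hsν : InfiniteSupport (ENNReal.ofReal (1 - γ) • μ + ENNReal.ofReal γ • Measure.dirac ζ) :=
    nu_infsupp μ γ ζ hγ1 hsupp
  -- kernel sum value
  have hKj : ∀ j, ‖φ j ζ‖ ^ 2 = ‖(Φ j).eval ζ‖ ^ 2 / I j := by
    intro j
    rw [hφ j ζ, norm_div, hnorm j, Complex.norm_real, Real.norm_eq_abs,
      abs_of_nonneg (Real.sqrt_nonneg _), div_pow, Real.sq_sqrt (hIpos j).le]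
  have hKnonneg : 0 ≤ K n := by
    rw [hK n]
    exact Finset.sum_nonneg fun j _ => sq_nonneg _
  -- the perturbation data
  set dR : ℝ := (1 - γ) + γ * K n with hdR
  have hdRpos : 0 < dR := by
    have : 0 ≤ γ * K n := mul_nonneg hγ0.le hKnonneg
    rw [hdR]; linarith
  have hdRne : ((dR : ℝ) : ℂ) ≠ 0 := by exact_mod_cast hdRpos.ne'
  set c : ℂ := (γ : ℂ) * (Φ (n + 1)).eval ζ / ((dR : ℝ) : ℂ) with hc
  set S : Polynomial ℂ := ∑ j ∈ range (n + 1),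
      Polynomial.C ((starRingEnd ℂ) ((Φ j).eval ζ) / ((I j : ℝ) : ℂ)) * Φ j with hS
  set Q : Polynomial ℂ := Φ (n + 1) - Polynomial.C c * S with hQ
  have hIne : ∀ j, ((I j : ℝ) : ℂ) ≠ 0 := fun j => by exact_mod_cast (hIpos j).ne'
  -- S(ζ) = K n
  have hSz : S.eval ζ = ((K n : ℝ) : ℂ) := by
    rw [hS, eval_finset_sum, hK n, Complex.ofReal_sum]
    refine Finset.sum_congr rfl fun j hj => ?_
    rw [eval_mul, eval_C, hKj j, div_mul_eq_mul_div, Complex.conj_mul', Complex.ofReal_div]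
    norm_cast
  -- μ-orthogonality relation for Q
  have hQk : ∀ k, k ≤ n → PI μ (Φ k) Q = -c * (starRingEnd ℂ) ((Φ k).eval ζ) := by
    intro k hk
    rw [hQ, PI_sub_right μ hcirc]
    have h1 : PI μ (Φ k) (Φ (n + 1)) = 0 := hΦ.2 k (n + 1) (by omega)
    have hCS : Polynomial.C c * S = ∑ j ∈ range (n + 1),
        Polynomial.C (c * ((starRingEnd ℂ) ((Φ j).eval ζ) / ((I j : ℝ) : ℂ))) * Φ j := by
      rw [hS, Finset.mul_sum]
      exact Finset.sum_congr rfl fun j _ => by rw [← mul_assoc, ← Polynomial.C_mul]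
    have h2 : PI μ (Φ k) (Polynomial.C c * S)
        = c * (starRingEnd ℂ) ((Φ k).eval ζ) := by
      rw [hCS, PI_sum_right μ hcirc, Finset.sum_eq_single k]
      · rw [hPIself k]
        field_simp [hIne k]
      · intro j hj hjk
        have h0 : PI μ (Φ k) (Φ j) = 0 := hΦ.2 k j (fun h => hjk h.symm)
        rw [h0, mul_zero]
      · intro h
        exact absurd (by simp; omega : k ∈ range (n + 1)) h
    rw [h1, h2]
    ring
  -- ν-orthogonality of Q
  have hQν : ∀ k, k ≤ n → PI (ENNReal.ofReal (1 - γ) • μ + ENNReal.ofReal γ • Measure.dirac ζ)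
      (Φ k) Q = 0 := by
    intro k hk
    rw [PI_nu μ γ ζ hcirc hγ0.le hγ1.le, hQk k hk]
    have hQζ : Q.eval ζ = (Φ (n + 1)).eval ζ - c * ((K n : ℝ) : ℂ) := by
      rw [hQ, eval_sub, eval_mul, eval_C, hSz]
    rw [hQζ]
    have hcdR : c * ((dR : ℝ) : ℂ) = (γ : ℂ) * (Φ (n + 1)).eval ζ := by
      rw [hc]; field_simp
    push_cast [hdR] at hcdR ⊢
    linear_combination (-(starRingEnd ℂ) ((Φ k).eval ζ)) * hcdR
  -- degree bookkeeping
  have hSdeg : S.natDegree ≤ n := by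
    rw [hS]
    refine natDegree_sum_le_of_forall_le _ _ fun j hj => ?_
    refine le_trans (natDegree_C_mul_le _ _) ?_
    rw [(hΦ.1 j).2]
    simp at hj; omega
  have hQdeg : Q.natDegree ≤ n + 1 := by
    rw [hQ]
    refine le_trans (natDegree_sub_le _ _) (max_le (le_of_eq (hΦ.1 (n + 1)).2) ?_)
    exact le_trans (natDegree_C_mul_le _ _) (le_trans hSdeg (by omega))
  have hQcoeff : Q.coeff (n + 1) = 1 := by
    rw [hQ, coeff_sub]
    have h1 : (Φ (n + 1)).coeff (n + 1) = 1 := by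
      have := (hΦ.1 (n + 1)).1
      rw [Monic, leadingCoeff, (hΦ.1 (n + 1)).2] at this
      exact this
    have h2 : (Polynomial.C c * S).coeff (n + 1) = 0 :=
      coeff_eq_zero_of_natDegree_lt
        (lt_of_le_of_lt (natDegree_C_mul_le _ _) (by omega))
    rw [h1, h2, sub_zero]
  set D : Polynomial ℂ := Ψ (n + 1) - Q with hD
  have hDdeg : D.natDegree ≤ n := by
    rw [natDegree_le_iff_coeff_eq_zero]
    intro N hN
    rw [hD, coeff_sub]
    rcases eq_or_lt_of_le (Nat.succ_le_of_lt hN) with h | h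
    · have hΨc : (Ψ (n + 1)).coeff (n + 1) = 1 := by
        have := (hΨ.1 (n + 1)).1
        rw [Monic, leadingCoeff, (hΨ.1 (n + 1)).2] at this
        exact this
      rw [← h, hΨc, hQcoeff, sub_self]
    · rw [coeff_eq_zero_of_natDegree_lt (by rw [(hΨ.1 (n + 1)).2]; omega),
        coeff_eq_zero_of_natDegree_lt (by omega : Q.natDegree < N), sub_self]
  -- D = 0
  have hD1 : PI (ENNReal.ofReal (1 - γ) • μ + ENNReal.ofReal γ • Measure.dirac ζ) D (Ψ (n + 1)) = 0 :=
    PI_zero_of _ hcν Ψ hΨ.1 (Ψ (n + 1)) n (fun j hj => hΨ.2 j (n + 1) (by omega)) D hDdeg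
  have hD2 : PI (ENNReal.ofReal (1 - γ) • μ + ENNReal.ofReal γ • Measure.dirac ζ) D Q = 0 :=
    PI_zero_of _ hcν Φ hΦ.1 Q n hQν D hDdeg
  have hDD : PI (ENNReal.ofReal (1 - γ) • μ + ENNReal.ofReal γ • Measure.dirac ζ) D D = 0 := by
    calc PI (ENNReal.ofReal (1 - γ) • μ + ENNReal.ofReal γ • Measure.dirac ζ) D D
        = PI (ENNReal.ofReal (1 - γ) • μ + ENNReal.ofReal γ • Measure.dirac ζ) D (Ψ (n + 1) - Q) := by
          rw [← hD]
      _ = PI _ D (Ψ (n + 1)) - PI _ D Q := PI_sub_right _ hcν _ _ _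
      _ = 0 := by rw [hD1, hD2, sub_zero]
  have hΨQ : Ψ (n + 1) = Q :=
    sub_eq_zero.mp (PI_eq_zero _ hcν hsν D hDD)
  -- evaluation at 0
  have hΨ0 : (Ψ (n + 1)).eval 0 = (Φ (n + 1)).eval 0 - c * S.eval 0 := by
    rw [hΨQ, hQ, eval_sub, eval_mul, eval_C]
  -- kernel identity
  have hker := kernel_identity μ hcirc hsupp Φ hΦ n
  have hconjS : ((I n : ℝ) : ℂ) * (starRingEnd ℂ) (S.eval 0)
      = ((Φ n).reverse.map (starRingEnd ℂ)).eval ζ := by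
    rw [hker, eval_finset_sum, eval_finset_sum, map_sum, Finset.mul_sum]
    refine Finset.sum_congr rfl fun j hj => ?_
    rw [eval_mul, eval_C, eval_mul, eval_C, hPIself j, hPIself n, map_mul, map_div₀,
      Complex.conj_conj, Complex.conj_ofReal, coeff_zero_eq_eval_zero]
    field_simp
  have hR0 : ((Φ n).reverse.map (starRingEnd ℂ)).eval 0 = 1 := by
    rw [← coeff_zero_eq_eval_zero, coeff_map, coeff_zero_reverse,
      (hΦ.1 n).1.leadingCoeff, map_one]
  -- final algebra
  have hsnpos : (0 : ℝ) < Real.sqrt (I n) := Real.sqrt_pos.mpr (hIpos n)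
  have hsn : ((Real.sqrt (I n) : ℝ) : ℂ) ≠ 0 := by exact_mod_cast hsnpos.ne'
  have hsn1 : ((Real.sqrt (I (n + 1)) : ℝ) : ℂ) ≠ 0 := by
    exact_mod_cast (Real.sqrt_pos.mpr (hIpos (n + 1))).ne'
  have hsqm : ((I n : ℝ) : ℂ)
      = ((Real.sqrt (I n) : ℝ) : ℂ) * ((Real.sqrt (I n) : ℝ) : ℂ) := by
    norm_cast
    exact (Real.mul_self_sqrt (hIpos n).le).symm
  have hγne : ((γ : ℝ) : ℂ) ≠ 0 := by exact_mod_cast hγ0.ne'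
  have hden : (((1 - γ) * γ⁻¹ + K n : ℝ) : ℂ) = ((dR : ℝ) : ℂ) / ((γ : ℝ) : ℂ) := by
    rw [hdR]
    push_cast
    field_simp
  have hconjS' : (starRingEnd ℂ) (S.eval 0)
      = ((Φ n).reverse.map (starRingEnd ℂ)).eval ζ / ((I n : ℝ) : ℂ) := by
    rw [← hconjS]
    field_simp [hIne n]
  rw [hαν n, hΨ0, hα n, map_sub, map_mul]
  rw [hφ (n + 1) ζ, hφs n 0, hφs n ζ, hnorm (n + 1), hnorm n, hR0, hden]
  rw [hconjS', hc, hsqm]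
  rw [map_div₀, map_mul, Complex.conj_ofReal, Complex.conj_ofReal, map_div₀, Complex.conj_ofReal]
  field_simp
  ring
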